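/- Let K be a field, x, y ∈ K with x ≠ 0 and y ≠ 0, and z ∈ K. Define binary operations on K by u | w = x⁻¹·(w − z − y·u) and u ∗ w = y⁻¹·(w − z − x·u), and set aₙ = (x + y)^(n−1) + z·∑_{k=0}^{n−2} (x + y)^k for n ≥ 1 (so a₁ = 1 and a₂ = x + y + z). Then (K; a₁, a₂, …, |, ∗) satisfies all seven Conway algebra axioms C1–C7. (Proposition 3.38(a).) -/
import Mathlib


/-- Proposition 3.38(a): the skein operations `u | w = x⁻¹·(w − z − y·u)`,
`u ∗ w = y⁻¹·(w − z − x·u)` with basepoints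
`aₙ = (x+y)^(n−1) + z·∑_{k=0}^{n−2} (x+y)^k` satisfy all seven Conway algebra
axioms C1–C7. -/
theorem threeVariable_isConwayAlgebra {K : Type*} [Field K] (x y z : K)
    (hx : x ≠ 0) (hy : y ≠ 0)
    (bar ast : K → K → K)
    (hbar : ∀ u w : K, bar u w = x⁻¹ * (w - z - y * u))
    (hast : ∀ u w : K, ast u w = y⁻¹ * (w - z - x * u))
    (a : ℕ → K)
    (ha : ∀ n : ℕ, 1 ≤ n →
      a n = (x + y) ^ (n - 1) + z * ∑ k ∈ Finset.range (n - 1), (x + y) ^ k) :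
    (∀ n : ℕ, 1 ≤ n → bar (a n) (a (n + 1)) = a n) ∧
    (∀ n : ℕ, 1 ≤ n → ast (a n) (a (n + 1)) = a n) ∧
    (∀ p q r s : K, bar (bar p q) (bar r s) = bar (bar p r) (bar q s)) ∧
    (∀ p q r s : K, ast (bar p q) (bar r s) = bar (ast p r) (ast q s)) ∧
    (∀ p q r s : K, ast (ast p q) (ast r s) = ast (ast p r) (ast q s)) ∧
    (∀ p q : K, ast (bar p q) q = p) ∧
    (∀ p q : K, bar (ast p q) q = p) := by
  have hrec : ∀ n : ℕ, 1 ≤ n → a (n + 1) = (x + y) * a n + z := by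
    intro n hn
    obtain ⟨m, rfl⟩ := Nat.exists_eq_add_of_le hn
    rw [ha _ (by omega), ha _ (by omega)]
    simp only [Nat.add_sub_cancel_left, Nat.add_succ_sub_one, Nat.add_comm 1 m]
    simp only [Nat.add_zero]
    rw [geom_sum_succ]
    ring
  refine ⟨?_, ?_, ?_, ?_, ?_, ?_, ?_⟩
  · intro n hn
    rw [hbar, hrec n hn]
    field_simp; all_goals ring
    all_goals ring
  · intro n hn
    rw [hast, hrec n hn]
    field_simp; all_goals ring
    all_goals ring
  · intro p q r s; simp only [hbar]; field_simp; all_goals ring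
  · intro p q r s; simp only [hbar, hast]; field_simp; all_goals ring
  · intro p q r s; simp only [hast]; field_simp; all_goals ring
  · intro p q; simp only [hbar, hast]; field_simp; all_goals ring
  · intro p q; simp only [hbar, hast]; field_simp; all_goals ring
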